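/- (Proposition 1) Let μ ∈ [0,1] and define the map F_μ on qubit states by F_μ(ρ_m) := (1/2)(I − μ(m_x X + m_y Y + m_z Z)). For every λ ∈ [0, (1+μ)/2], there exists a family of positive semidefinite 4×4 complex matrices {π_{[i,j,k]}}_{i,j,k∈{±1}} with Σ_{i,j,k} π_{[i,j,k]} = I⊗I such that for all m ∈ ℝ³ with ‖m‖ ≤ 1: Σ_{j,k} Tr[π_{[i,j,k]} (ρ_m ⊗ F_μ(ρ_m))] = (1/2)(1 + λ·i·m_x) for each i ∈ {±1}, Σ_{i,k} Tr[π_{[i,j,k]} (ρ_m ⊗ F_μ(ρ_m))] = (1/2)(1 + λ·j·m_y) for each j ∈ {±1}, and Σ_{i,j} Tr[π_{[i,j,k]} (ρ_m ⊗ F_μ(ρ_m))] = (1/2)(1 + λ·k·m_z) for each k ∈ {±1}. That is, the unsharp observables X^λ, Y^λ, Z^λ are jointly measurable on the configuration ρ_m ⊗ F_μ(ρ_m) for all λ ≤ (1+μ)/2. -/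

import Mathlib

open Matrix Complex
open scoped Kronecker Matrix ComplexOrder

noncomputable section

/-- Pauli matrix σ_x. -/
def σx : Matrix (Fin 2) (Fin 2) ℂ := !![0, 1; 1, 0]
/-- Pauli matrix σ_y. -/
def σy : Matrix (Fin 2) (Fin 2) ℂ := !![0, -Complex.I; Complex.I, 0]
/-- Pauli matrix σ_z. -/
def σz : Matrix (Fin 2) (Fin 2) ℂ := !![1, 0; 0, -1]

/-- The two-element set {+1, -1} of outcomes/signs. -/
def pm : Finset ℝ := {1, -1}

/-- Qubit state with Bloch vector m: ρ_m = (1/2)(I + m·σ). -/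
def rho (m : Fin 3 → ℝ) : Matrix (Fin 2) (Fin 2) ℂ :=
  (2 : ℂ)⁻¹ • ((1 : Matrix (Fin 2) (Fin 2) ℂ) + (m 0 : ℂ) • σx + (m 1 : ℂ) • σy + (m 2 : ℂ) • σz)

/-- The antiparallel-configuration effects Π↑↓_{[i,j,k]}. -/
def PiAnti (i j k : ℝ) : Matrix (Fin 2 × Fin 2) (Fin 2 × Fin 2) ℂ :=
  (16 : ℂ)⁻¹ • ((2 : ℂ) • (1 : Matrix (Fin 2 × Fin 2) (Fin 2 × Fin 2) ℂ)
    + (i : ℂ) • (σx ⊗ₖ (1 : Matrix (Fin 2) (Fin 2) ℂ) - (1 : Matrix (Fin 2) (Fin 2) ℂ) ⊗ₖ σx)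
    + (j : ℂ) • (σy ⊗ₖ (1 : Matrix (Fin 2) (Fin 2) ℂ) - (1 : Matrix (Fin 2) (Fin 2) ℂ) ⊗ₖ σy)
    + (k : ℂ) • (σz ⊗ₖ (1 : Matrix (Fin 2) (Fin 2) ℂ) - (1 : Matrix (Fin 2) (Fin 2) ℂ) ⊗ₖ σz)
    - ((i * j : ℝ) : ℂ) • (σx ⊗ₖ σy + σy ⊗ₖ σx)
    - ((j * k : ℝ) : ℂ) • (σy ⊗ₖ σz + σz ⊗ₖ σy)
    - ((k * i : ℝ) : ℂ) • (σz ⊗ₖ σx + σx ⊗ₖ σz))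

/-- The GPT effects Π#_{[i,j,k]}. -/
def PiSharp (i j k : ℝ) : Matrix (Fin 2 × Fin 2) (Fin 2 × Fin 2) ℂ :=
  (16 : ℂ)⁻¹ • ((2 : ℂ) • (1 : Matrix (Fin 2 × Fin 2) (Fin 2 × Fin 2) ℂ)
    + (i : ℂ) • (σx ⊗ₖ (1 : Matrix (Fin 2) (Fin 2) ℂ) + (1 : Matrix (Fin 2) (Fin 2) ℂ) ⊗ₖ σx)
    + (j : ℂ) • (σy ⊗ₖ (1 : Matrix (Fin 2) (Fin 2) ℂ) + (1 : Matrix (Fin 2) (Fin 2) ℂ) ⊗ₖ σy)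
    + (k : ℂ) • (σz ⊗ₖ (1 : Matrix (Fin 2) (Fin 2) ℂ) + (1 : Matrix (Fin 2) (Fin 2) ℂ) ⊗ₖ σz)
    + ((i * j : ℝ) : ℂ) • (σx ⊗ₖ σy + σy ⊗ₖ σx)
    + ((j * k : ℝ) : ℂ) • (σy ⊗ₖ σz + σz ⊗ₖ σy)
    + ((k * i : ℝ) : ℂ) • (σz ⊗ₖ σx + σx ⊗ₖ σz))

end

noncomputable section

/-- The parallel-configuration effects Π↑↑_{[i,j,k]} of Carmeli et al. -/
def PiPar (i j k : ℝ) : Matrix (Fin 2 × Fin 2) (Fin 2 × Fin 2) ℂ :=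
  (32 : ℂ)⁻¹ • ((4 : ℂ) • (1 : Matrix (Fin 2 × Fin 2) (Fin 2 × Fin 2) ℂ)
    + ((Real.sqrt 3 * i : ℝ) : ℂ) • (σx ⊗ₖ (1 : Matrix (Fin 2) (Fin 2) ℂ) + (1 : Matrix (Fin 2) (Fin 2) ℂ) ⊗ₖ σx)
    + ((Real.sqrt 3 * j : ℝ) : ℂ) • (σy ⊗ₖ (1 : Matrix (Fin 2) (Fin 2) ℂ) + (1 : Matrix (Fin 2) (Fin 2) ℂ) ⊗ₖ σy)
    + ((Real.sqrt 3 * k : ℝ) : ℂ) • (σz ⊗ₖ (1 : Matrix (Fin 2) (Fin 2) ℂ) + (1 : Matrix (Fin 2) (Fin 2) ℂ) ⊗ₖ σz)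
    + ((i * j : ℝ) : ℂ) • (σx ⊗ₖ σy + σy ⊗ₖ σx)
    + ((j * k : ℝ) : ℂ) • (σy ⊗ₖ σz + σz ⊗ₖ σy)
    + ((k * i : ℝ) : ℂ) • (σz ⊗ₖ σx + σx ⊗ₖ σz))

/-- The universal spin-flip (transformation) map F(A) = (Tr A)·I − A. -/
def Flip (A : Matrix (Fin 2) (Fin 2) ℂ) : Matrix (Fin 2) (Fin 2) ℂ :=
  A.trace • (1 : Matrix (Fin 2) (Fin 2) ℂ) - A

/-- The map id ⊗ Φ on M₂(ℂ) ⊗ M₂(ℂ), acting as A ⊗ B ↦ A ⊗ Φ(B) extended linearly. -/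
def idTensor (Φ : Matrix (Fin 2) (Fin 2) ℂ → Matrix (Fin 2) (Fin 2) ℂ)
    (M : Matrix (Fin 2 × Fin 2) (Fin 2 × Fin 2) ℂ) : Matrix (Fin 2 × Fin 2) (Fin 2 × Fin 2) ℂ :=
  Matrix.of fun p q => Φ (Matrix.of fun b d => M (p.1, b) (q.1, d)) p.2 q.2

/-- Choi matrix Σ_{k,l} E_{kl} ⊗ Λ(E_{kl}) of a linear map Λ on M₂(ℂ). -/
def Choi (Λ : Matrix (Fin 2) (Fin 2) ℂ →ₗ[ℂ] Matrix (Fin 2) (Fin 2) ℂ) :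
    Matrix (Fin 2 × Fin 2) (Fin 2 × Fin 2) ℂ :=
  ∑ k : Fin 2, ∑ l : Fin 2,
    (Matrix.single k l (1 : ℂ)) ⊗ₖ Λ (Matrix.single k l (1 : ℂ))

/-- Sign value of a Boolean outcome: true ↦ +1, false ↦ −1. -/
def sgn (b : Bool) : ℝ := if b then 1 else -1

/-- Unsharp spin effect P^a_{n̂,λ} = (1/2)(I + λ a n̂·σ). -/
def Peff (n : Fin 3 → ℝ) (lam a : ℝ) : Matrix (Fin 2) (Fin 2) ℂ :=
  (2 : ℂ)⁻¹ • ((1 : Matrix (Fin 2) (Fin 2) ℂ)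
    + ((lam * a * n 0 : ℝ) : ℂ) • σx + ((lam * a * n 1 : ℝ) : ℂ) • σy
    + ((lam * a * n 2 : ℝ) : ℂ) • σz)

/-- Computational basis vector |ab⟩ of ℂ²⊗ℂ². -/
def ket (a b : Fin 2) : Fin 2 × Fin 2 → ℂ := fun p => if p = (a, b) then 1 else 0

/-- Bell vector |φ⁺⟩. -/
def phiP : Fin 2 × Fin 2 → ℂ := ((Real.sqrt 2 : ℝ) : ℂ)⁻¹ • (ket 0 0 + ket 1 1)
/-- Bell vector |φ⁻⟩. -/
def phiM : Fin 2 × Fin 2 → ℂ := ((Real.sqrt 2 : ℝ) : ℂ)⁻¹ • (ket 0 0 - ket 1 1)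
/-- Bell vector |ψ⁺⟩. -/
def psiP : Fin 2 × Fin 2 → ℂ := ((Real.sqrt 2 : ℝ) : ℂ)⁻¹ • (ket 0 1 + ket 1 0)
/-- Bell vector |ψ⁻⟩. -/
def psiM : Fin 2 × Fin 2 → ℂ := ((Real.sqrt 2 : ℝ) : ℂ)⁻¹ • (ket 0 1 - ket 1 0)

/-- The vector |ξ_{[i,j,k]}⟩ = (1/2)(|ψ⁻⟩ − i|φ⁻⟩ + 𝐢 j|φ⁺⟩ + k|ψ⁺⟩). -/
def xi (i j k : ℝ) : Fin 2 × Fin 2 → ℂ :=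
  (2 : ℂ)⁻¹ • (psiM - (i : ℂ) • phiM + (Complex.I * (j : ℂ)) • phiP + (k : ℂ) • psiP)

end


section Aux

noncomputable section

lemma rho_eq (m : Fin 3 → ℝ) : rho m =
    !![(1 + m 2 : ℂ)/2, (m 0 - Complex.I * m 1)/2;
       (m 0 + Complex.I * m 1)/2, (1 - m 2 : ℂ)/2] := by
  ext p q
  fin_cases p <;> fin_cases q <;>
    simp [rho, σx, σy, σz, Matrix.one_apply] <;> ring

lemma tr_rho (m : Fin 3 → ℝ) : (rho m).trace = 1 := by
  simp [rho_eq, Matrix.trace, Fin.sum_univ_two]; ring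

lemma tr_x_rho (m : Fin 3 → ℝ) : (σx * rho m).trace = (m 0 : ℂ) := by
  simp [rho_eq, Matrix.trace, Matrix.mul_apply, Fin.sum_univ_two, σx, σy, σz]; ring

lemma tr_y_rho (m : Fin 3 → ℝ) : (σy * rho m).trace = (m 1 : ℂ) := by
  simp [rho_eq, Matrix.trace, Matrix.mul_apply, Fin.sum_univ_two, σx, σy, σz]
  ring_nf; simp [Complex.I_sq]; try ring

lemma tr_z_rho (m : Fin 3 → ℝ) : (σz * rho m).trace = (m 2 : ℂ) := by
  simp [rho_eq, Matrix.trace, Matrix.mul_apply, Fin.sum_univ_two, σx, σy, σz]; ring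

lemma trK (P Q : Matrix (Fin 2) (Fin 2) ℂ) (A B : Matrix (Fin 2) (Fin 2) ℂ) :
    ((P ⊗ₖ Q) * (A ⊗ₖ B)).trace = (P * A).trace * (Q * B).trace := by
  rw [← Matrix.mul_kronecker_mul, Matrix.trace_kronecker]

lemma trace_rho_kron (μ : ℝ) (m : Fin 3 → ℝ) :
    (rho m ⊗ₖ rho (-(μ • m))).trace = 1 := by
  rw [Matrix.trace_kronecker, tr_rho, tr_rho, one_mul]

lemma tracePiAnti (i j k μ : ℝ) (m : Fin 3 → ℝ) :
    (PiAnti i j k * (rho m ⊗ₖ rho (-(μ • m)))).trace =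
    (((16:ℝ)⁻¹ * (2 + i*(1+μ)*m 0 + j*(1+μ)*m 1 + k*(1+μ)*m 2
      + 2*μ*(i*j*(m 0*m 1) + j*k*(m 1*m 2) + k*i*(m 2*m 0))) : ℝ) : ℂ) := by
  have hm : ∀ r : Fin 3, ((-(μ • m)) r : ℂ) = -(μ * m r) := by intro r; simp
  have h1 := trace_rho_kron μ m
  simp only [PiAnti, smul_mul_assoc, add_mul, sub_mul, Matrix.trace_smul, Matrix.trace_add,
    Matrix.trace_sub, h1, trK, tr_rho, tr_x_rho, tr_y_rho, tr_z_rho, hm, Matrix.one_mul,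
    smul_eq_mul]
  push_cast
  ring

def wvec (i j k : ℝ) : Fin 2 × Fin 2 → ℂ := fun q =>
  if q.1 = 0 then (if q.2 = 0 then (Complex.I * j - i)/4 else (1+(k:ℂ))/4)
  else (if q.2 = 0 then ((k:ℂ)-1)/4 else ((i:ℂ) + Complex.I*j)/4)

def Avec (i j k : ℝ) : Matrix (Fin 1) (Fin 2 × Fin 2) ℂ :=
  Matrix.of fun _ q => (starRingEnd ℂ) (wvec i j k q)

set_option maxHeartbeats 4000000 in
lemma piAnti_eq (i j k : ℝ) (hi : i = 1 ∨ i = -1) (hj : j = 1 ∨ j = -1)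
    (hk : k = 1 ∨ k = -1) : PiAnti i j k = (Avec i j k)ᴴ * Avec i j k := by
  rcases hi with rfl|rfl <;> rcases hj with rfl|rfl <;> rcases hk with rfl|rfl <;>
  ext p q <;>
  fin_cases p <;> fin_cases q <;>
    simp [PiAnti, Avec, wvec, Matrix.mul_apply, Matrix.conjTranspose_apply, Fin.sum_univ_one,
      Matrix.kroneckerMap_apply, Matrix.one_apply, σx, σy, σz, map_div₀, map_sub, map_add,
      _root_.map_mul, map_ofNat, Complex.conj_I, Complex.conj_ofReal, Prod.ext_iff] <;>
    norm_num [Complex.ext_iff]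

lemma piAnti_psd (i j k : ℝ) (hi : i = 1 ∨ i = -1) (hj : j = 1 ∨ j = -1)
    (hk : k = 1 ∨ k = -1) : (PiAnti i j k).PosSemidef := by
  rw [piAnti_eq i j k hi hj hk]
  exact Matrix.posSemidef_conjTranspose_mul_self _

lemma psd_smul {n : Type*} [Fintype n] {M : Matrix n n ℂ} (hM : M.PosSemidef) {a : ℝ}
    (ha : 0 ≤ a) : ((a:ℂ) • M).PosSemidef := by
  constructor
  · unfold Matrix.IsHermitian
    rw [Matrix.conjTranspose_smul, hM.1]
    simp
  · intro x
    have h := hM.2 x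
    have ha' : (0:ℂ) ≤ (a:ℂ) := by exact_mod_cast Complex.zero_le_real.mpr ha
    have e : (x.sum fun i xi => x.sum fun j xj => star xi * ((a:ℂ) • M) i j * xj)
        = (a:ℂ) * x.sum fun i xi => x.sum fun j xj => star xi * M i j * xj := by
      simp only [Matrix.smul_apply, smul_eq_mul, Finsupp.mul_sum]
      apply Finsupp.sum_congr; intro i _
      apply Finsupp.sum_congr; intro j _
      ring
    rw [e]
    exact mul_nonneg ha' h

lemma sum_piAnti : ∑ i ∈ pm, ∑ j ∈ pm, ∑ k ∈ pm, PiAnti i j k = 1 := by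
  have h : (1:ℝ) ≠ -1 := by norm_num
  simp only [pm, Finset.sum_insert, Finset.mem_singleton, h, not_false_iff,
    Finset.sum_singleton]
  simp only [PiAnti]
  push_cast
  module

end

end Aux

/-- Proposition 1: X^λ, Y^λ, Z^λ are jointly measurable on the
configuration ρ_m ⊗ F_μ(ρ_m) for all λ ∈ [0, (1+μ)/2], where
F_μ(ρ_m) = (1/2)(I − μ m·σ) = ρ_{−μm}. -/
theorem jointly_measurable_Fmu_config (μ : ℝ) (hμ : μ ∈ Set.Icc (0 : ℝ) 1)
    (lam : ℝ) (hlam : lam ∈ Set.Icc (0 : ℝ) ((1 + μ) / 2)) :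
    ∃ π : ℝ → ℝ → ℝ → Matrix (Fin 2 × Fin 2) (Fin 2 × Fin 2) ℂ,
      (∀ i ∈ pm, ∀ j ∈ pm, ∀ k ∈ pm, (π i j k).PosSemidef) ∧
      (∑ i ∈ pm, ∑ j ∈ pm, ∑ k ∈ pm, π i j k = 1) ∧
      ∀ m : Fin 3 → ℝ, m 0 ^ 2 + m 1 ^ 2 + m 2 ^ 2 ≤ 1 →
        (∀ i ∈ pm, ∑ j ∈ pm, ∑ k ∈ pm, (π i j k * (rho m ⊗ₖ rho (-(μ • m)))).trace
            = ((1 / 2 * (1 + lam * i * m 0) : ℝ) : ℂ)) ∧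
        (∀ j ∈ pm, ∑ i ∈ pm, ∑ k ∈ pm, (π i j k * (rho m ⊗ₖ rho (-(μ • m)))).trace
            = ((1 / 2 * (1 + lam * j * m 1) : ℝ) : ℂ)) ∧
        (∀ k ∈ pm, ∑ i ∈ pm, ∑ j ∈ pm, (π i j k * (rho m ⊗ₖ rho (-(μ • m)))).trace
            = ((1 / 2 * (1 + lam * k * m 2) : ℝ) : ℂ)) := by
  obtain ⟨hμ0, hμ1⟩ := hμ
  obtain ⟨hl0, hl1⟩ := hlam
  have hμpos : (0:ℝ) < 1 + μ := by linarith
  set t : ℝ := 2 * lam / (1 + μ) with htdef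
  have htr : t * (1 + μ) = 2 * lam := by
    rw [htdef, div_mul_cancel₀ _ hμpos.ne']
  have ht0 : 0 ≤ t := by positivity
  have ht1 : t ≤ 1 := by
    rw [htdef, div_le_one hμpos]; linarith
  have hC : (t:ℂ) * (1 + μ) = 2 * lam := by exact_mod_cast congrArg (Complex.ofReal) htr
  have hne : (1:ℝ) ≠ -1 := by norm_num
  refine ⟨fun i j k => (t:ℂ) • PiAnti i j k + (((1 - t)/8 : ℝ):ℂ) • 1, ?_, ?_, ?_⟩
  · intro i hi j hj k hk
    simp only [pm, Finset.mem_insert, Finset.mem_singleton] at hi hj hk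
    have h1 := piAnti_psd i j k hi hj hk
    have h2 : ((((1 - t)/8 : ℝ):ℂ) • (1 : Matrix (Fin 2 × Fin 2) (Fin 2 × Fin 2) ℂ)).PosSemidef :=
      psd_smul Matrix.PosSemidef.one (by linarith)
    exact Matrix.PosSemidef.add (psd_smul h1 ht0) h2
  · have hsplit : ∑ i ∈ pm, ∑ j ∈ pm, ∑ k ∈ pm,
        ((t:ℂ) • PiAnti i j k + (((1 - t)/8 : ℝ):ℂ) • (1 : Matrix (Fin 2 × Fin 2) (Fin 2 × Fin 2) ℂ))
        = (t:ℂ) • (∑ i ∈ pm, ∑ j ∈ pm, ∑ k ∈ pm, PiAnti i j k)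
          + (((1 - t) : ℝ):ℂ) • (1 : Matrix (Fin 2 × Fin 2) (Fin 2 × Fin 2) ℂ) := by
      simp only [pm, Finset.sum_insert, Finset.mem_singleton, hne, not_false_iff,
        Finset.sum_singleton]
      push_cast
      module
    rw [hsplit, sum_piAnti]
    push_cast
    module
  · intro m _
    have htrace : ∀ i j k : ℝ,
        (((t:ℂ) • PiAnti i j k + (((1 - t)/8 : ℝ):ℂ) • (1 : Matrix (Fin 2 × Fin 2) (Fin 2 × Fin 2) ℂ))
          * (rho m ⊗ₖ rho (-(μ • m)))).trace
        = (t:ℂ) * (((16:ℝ)⁻¹ * (2 + i*(1+μ)*m 0 + j*(1+μ)*m 1 + k*(1+μ)*m 2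
            + 2*μ*(i*j*(m 0*m 1) + j*k*(m 1*m 2) + k*i*(m 2*m 0))) : ℝ) : ℂ)
          + (((1 - t)/8 : ℝ):ℂ) := by
      intro i j k
      rw [add_mul, smul_mul_assoc, smul_mul_assoc, one_mul, Matrix.trace_add,
        Matrix.trace_smul, Matrix.trace_smul, tracePiAnti, trace_rho_kron]
      simp [smul_eq_mul]
    refine ⟨?_, ?_, ?_⟩
    · intro i _
      simp only [pm, Finset.sum_insert, Finset.mem_singleton, hne, not_false_iff,
        Finset.sum_singleton, htrace]
      push_cast
      linear_combination ((i:ℂ) * (m 0) / 4) * hC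
    · intro j _
      simp only [pm, Finset.sum_insert, Finset.mem_singleton, hne, not_false_iff,
        Finset.sum_singleton, htrace]
      push_cast
      linear_combination ((j:ℂ) * (m 1) / 4) * hC
    · intro k _
      simp only [pm, Finset.sum_insert, Finset.mem_singleton, hne, not_false_iff,
        Finset.sum_singleton, htrace]
      push_cast
      linear_combination ((k:ℂ) * (m 2) / 4) * hC
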